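/- With E_n(x;q) = Σ_{k=0}^n E_{n,k}(α,β,q) x^k where E_{n,k} satisfies E_{0,0}=1 and E_{n,k} = q^(β+k-1)[n-k+α]E_{n-1,k-1} + [k+β]E_{n-1,k}, one has, as an identity of formal power series in x over ℚ(q): E_n(x;q)/(x;q)_{n+α+β} = Σ_{j≥0} x^j · qbinom(j+α+β-1, j) · [j+β]^n, for all n ≥ 0 and positive integers α, β. -/

import Mathlib

open Finset

noncomputable section

abbrev K : Type := RatFunc ℚ

def qq : K := RatFunc.X

def qint (m : ℕ) : K := ∑ i ∈ Finset.range m, qq ^ i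

def qfact (m : ℕ) : K := ∏ i ∈ Finset.range m, qint (i + 1)

def qbinom (a b : ℕ) : K := qfact a / (qfact b * qfact (a - b))

def E (α β : ℕ) : ℕ → ℕ → K
  | 0, k => if k = 0 then 1 else 0
  | n + 1, 0 => qint β * E α β n 0
  | n + 1, k + 1 =>
      qq ^ (β + k) * qint (n - k + α) * E α β n k + qint (k + 1 + β) * E α β n (k + 1)

def poch (N : ℕ) : PowerSeries K :=
  ∏ i ∈ Finset.range N, (1 - PowerSeries.C (qq ^ i) * PowerSeries.X)

lemma qint_mul_one_sub (m : ℕ) : (1 - qq) * qint m = 1 - qq ^ m := by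
  have h := geom_sum_mul qq m
  unfold qint
  linear_combination -h

lemma qq_pow_ne_one (m : ℕ) (hm : 1 ≤ m) : qq ^ m ≠ 1 := by
  intro h
  have h2 : (algebraMap (Polynomial ℚ) K) (Polynomial.X ^ m) =
      (algebraMap (Polynomial ℚ) K) 1 := by
    simp only [map_pow, map_one, RatFunc.algebraMap_X]
    exact h
  have := RatFunc.algebraMap_injective ℚ h2
  have hdeg := congrArg Polynomial.natDegree this
  simp [Polynomial.natDegree_X_pow] at hdeg
  omega

lemma one_sub_qq_ne : (1 : K) - qq ≠ 0 := by
  intro h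
  exact qq_pow_ne_one 1 le_rfl (by rw [pow_one]; linear_combination -h)

lemma qint_ne_zero (m : ℕ) (hm : 1 ≤ m) : qint m ≠ 0 := by
  intro h
  have h2 := qint_mul_one_sub m
  rw [h, mul_zero] at h2
  exact qq_pow_ne_one m hm (by linear_combination h2)

lemma qfact_ne_zero (m : ℕ) : qfact m ≠ 0 := by
  unfold qfact
  exact Finset.prod_ne_zero_iff.mpr fun i _ => qint_ne_zero (i+1) (Nat.le_add_left 1 i)

lemma qfact_zero : qfact 0 = 1 := by simp [qfact]

lemma qfact_succ (m : ℕ) : qfact (m + 1) = qfact m * qint (m + 1) := by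
  unfold qfact; rw [Finset.prod_range_succ]

lemma qint_add (a b : ℕ) : qint (a + b) = qint a + qq ^ a * qint b := by
  unfold qint
  rw [Finset.sum_range_add, Finset.mul_sum]
  congr 1
  exact Finset.sum_congr rfl fun i _ => (pow_add qq a i)

lemma qbinom_zero (a : ℕ) : qbinom a 0 = 1 := by
  unfold qbinom
  rw [qfact_zero, one_mul, Nat.sub_zero, div_self (qfact_ne_zero a)]

lemma pascal (M j : ℕ) :
    qbinom (M + j + 2) (j + 1) = qbinom (M + j + 1) (j + 1) + qq ^ (M + 1) * qbinom (M + j + 1) j := by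
  unfold qbinom
  have e1 : M + j + 2 - (j + 1) = M + 1 := by omega
  have e2 : M + j + 1 - (j + 1) = M := by omega
  have e3 : M + j + 1 - j = M + 1 := by omega
  rw [e1, e2, e3]
  rw [show M + j + 2 = (M + j + 1) + 1 from rfl, qfact_succ (M + j + 1),
    qfact_succ j, qfact_succ M,
    show M + j + 1 + 1 = (M + 1) + (j + 1) from by omega, qint_add (M + 1) (j + 1)]
  have n1 : qint (j + 1) ≠ 0 := qint_ne_zero _ (by omega)
  have n2 : qint (M + 1) ≠ 0 := qint_ne_zero _ (by omega)
  have n3 : qfact j ≠ 0 := qfact_ne_zero j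
  have n4 : qfact M ≠ 0 := qfact_ne_zero M
  have n5 : qfact (M + j + 1) ≠ 0 := qfact_ne_zero _
  field_simp

open PowerSeries

def Aser (α β n : ℕ) : PowerSeries K := PowerSeries.mk (fun k => E α β n k)

def Fser (α β n : ℕ) : PowerSeries K :=
  PowerSeries.mk (fun j => qbinom (j + α + β - 1) j * qint (j + β) ^ n)

def Gser (N : ℕ) : PowerSeries K := PowerSeries.mk (fun j => qbinom (N + j - 1) j)

lemma E_zero_of_lt (α β : ℕ) : ∀ n k, n < k → E α β n k = 0 := by
  intro n
  induction n with
  | zero =>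
      intro k hk
      match k, hk with
      | k + 1, _ => simp [E]
  | succ n ih =>
      intro k hk
      match k, hk with
      | k + 1, hk =>
        rw [E, ih k (by omega), ih (k+1) (by omega)]
        ring

lemma coeff_one_sub_CX_mul (a : K) (f : PowerSeries K) (k : ℕ) :
    PowerSeries.coeff k ((1 - PowerSeries.C a * PowerSeries.X) * f) =
      PowerSeries.coeff k f - a * (if k = 0 then 0 else PowerSeries.coeff (k - 1) f) := by
  rw [sub_mul, one_mul, map_sub, mul_assoc, PowerSeries.coeff_C_mul]
  cases k with
  | zero => simp [PowerSeries.coeff_zero_X_mul]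
  | succ m => simp [PowerSeries.coeff_succ_X_mul]

lemma constCoeff_poch (N : ℕ) : PowerSeries.constantCoeff (poch N) = 1 := by
  unfold poch
  rw [map_prod]
  apply Finset.prod_eq_one
  intro i _
  simp

lemma rescale_poch (N : ℕ) :
    PowerSeries.rescale qq (poch N) =
      ∏ i ∈ Finset.range N, (1 - PowerSeries.C (qq ^ (i + 1)) * PowerSeries.X) := by
  unfold poch
  rw [map_prod]
  apply Finset.prod_congr rfl
  intro i _
  ext k
  rw [PowerSeries.coeff_rescale]
  cases k with
  | zero => simp
  | succ m =>
      cases m with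
      | zero => simp [pow_succ]; ring
      | succ l => simp [← map_pow, PowerSeries.coeff_C]

lemma poch_succ (N : ℕ) : poch (N + 1) = poch N * (1 - PowerSeries.C (qq ^ N) * PowerSeries.X) := by
  unfold poch
  exact Finset.prod_range_succ _ _

lemma lemIII (N : ℕ) :
    (1 - PowerSeries.X) * PowerSeries.rescale qq (poch N) =
      (1 - PowerSeries.C (qq ^ N) * PowerSeries.X) * poch N := by
  induction N with
  | zero => simp [poch, rescale_poch]
  | succ M ih =>
      rw [rescale_poch] at ih ⊢
      rw [Finset.prod_range_succ, ← mul_assoc, ih, poch_succ]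
      ring

lemma E_succ_zero (α β n : ℕ) : E α β (n + 1) 0 = qint β * E α β n 0 := by rw [E]

lemma E_succ_succ (α β n k : ℕ) : E α β (n + 1) (k + 1) =
    qq ^ (β + k) * qint (n - k + α) * E α β n k + qint (k + 1 + β) * E α β n (k + 1) := by rw [E]

lemma qbinom_self (a : ℕ) : qbinom a a = 1 := by
  unfold qbinom
  rw [Nat.sub_self, qfact_zero, mul_one, div_self (qfact_ne_zero a)]

lemma lemII (α β n : ℕ) :
    PowerSeries.C (1 - qq) * Fser α β (n + 1) =
      Fser α β n - PowerSeries.C (qq ^ β) * PowerSeries.rescale qq (Fser α β n) := by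
  ext j
  rw [PowerSeries.coeff_C_mul, map_sub, PowerSeries.coeff_C_mul, PowerSeries.coeff_rescale]
  simp only [Fser, PowerSeries.coeff_mk]
  linear_combination (qbinom (j + α + β - 1) j * qint (j + β) ^ n) * qint_mul_one_sub (j + β)

lemma lemI (α β n : ℕ) :
    PowerSeries.C (1 - qq) * Aser α β (n + 1) =
      (1 - PowerSeries.C (qq ^ (n + α + β)) * PowerSeries.X) * Aser α β n -
        PowerSeries.C (qq ^ β) *
          ((1 - PowerSeries.X) * PowerSeries.rescale qq (Aser α β n)) := by
  have h1 : (1 - PowerSeries.X : PowerSeries K) = 1 - PowerSeries.C 1 * PowerSeries.X := by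
    rw [map_one, one_mul]
  rw [h1]
  ext k
  rw [PowerSeries.coeff_C_mul, map_sub, PowerSeries.coeff_C_mul, coeff_one_sub_CX_mul,
    coeff_one_sub_CX_mul]
  simp only [PowerSeries.coeff_rescale, Aser, PowerSeries.coeff_mk]
  cases k with
  | zero =>
      simp only [if_pos rfl, if_true, mul_zero, sub_zero, pow_zero, one_mul]
      rw [E_succ_zero]

      linear_combination (E α β n 0) * qint_mul_one_sub β
  | succ m =>
      simp only [if_neg (Nat.succ_ne_zero m), Nat.add_sub_cancel]
      rw [E_succ_succ]
      by_cases hm : m ≤ n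
      · obtain ⟨d, rfl⟩ := Nat.exists_eq_add_of_le hm
        rw [Nat.add_sub_cancel_left]
        linear_combination (qq ^ (β + m) * E α β (m + d) m) * qint_mul_one_sub (d + α) +
          (E α β (m + d) (m + 1)) * qint_mul_one_sub (m + 1 + β)
      · rw [E_zero_of_lt α β n m (by omega), E_zero_of_lt α β n (m + 1) (by omega)]
        ring

lemma lemIV (N : ℕ) :
    (1 - PowerSeries.C (qq ^ (N + 1)) * PowerSeries.X) * Gser (N + 2) = Gser (N + 1) := by
  ext j
  rw [coeff_one_sub_CX_mul]
  simp only [Gser, PowerSeries.coeff_mk]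
  cases j with
  | zero =>
      rw [show N + 2 + 0 - 1 = N + 1 from by omega, show N + 1 + 0 - 1 = N from by omega,
        qbinom_zero, qbinom_zero]
      norm_num
  | succ m =>
      simp only [if_neg (Nat.succ_ne_zero m), Nat.add_sub_cancel]
      rw [show N + 2 + (m + 1) - 1 = N + m + 2 from by omega,
        show N + 2 + m - 1 = N + m + 1 from by omega,
        show N + 1 + (m + 1) - 1 = N + m + 1 from by omega]
      linear_combination pascal N m

lemma pochG : ∀ N : ℕ, poch (N + 1) * Gser (N + 1) = 1 := by
  intro N
  induction N with
  | zero =>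
      have h0 : poch 1 = 1 - PowerSeries.C (qq ^ 0) * PowerSeries.X := by
        rw [poch_succ 0, show poch 0 = 1 from by unfold poch; exact Finset.prod_range_zero _,
          one_mul]
      rw [h0]
      ext j
      rw [coeff_one_sub_CX_mul]
      simp only [Gser, PowerSeries.coeff_mk, pow_zero, one_mul]
      cases j with
      | zero =>
          rw [show 1 + 0 - 1 = 0 from by omega, qbinom_zero]
          simp
      | succ m =>
          simp only [if_neg (Nat.succ_ne_zero m), Nat.add_sub_cancel, PowerSeries.coeff_one,
            if_neg (Nat.succ_ne_zero m)]
          rw [show 1 + (m + 1) - 1 = m + 1 from by omega, show 1 + m - 1 = m from by omega,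
            qbinom_self, qbinom_self]
          ring
  | succ M ih =>
      rw [poch_succ, mul_assoc, mul_comm (1 - PowerSeries.C (qq ^ (M + 1)) * PowerSeries.X) _]
      rw [show M + 1 + 1 = M + 2 from rfl, mul_comm (Gser (M + 2)) _, lemIV, ih]

lemma Aeq (α β : ℕ) (hα : 1 ≤ α) (hβ : 1 ≤ β) :
    ∀ n, Aser α β n = poch (n + α + β) * Fser α β n := by
  intro n
  induction n with
  | zero =>
      have hF : Fser α β 0 = Gser (α + β) := by
        ext j
        simp only [Fser, Gser, PowerSeries.coeff_mk, pow_zero, mul_one]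
        rw [show j + α + β - 1 = α + β + j - 1 from by omega]
      have hA : Aser α β 0 = 1 := by
        ext j
        cases j with
        | zero => simp [Aser, E, PowerSeries.coeff_one]
        | succ m => simp [Aser, E, PowerSeries.coeff_one]
      obtain ⟨M, hM⟩ : ∃ M, α + β = M + 1 := ⟨α + β - 1, by omega⟩
      rw [hA, zero_add, hF, hM, pochG M]
  | succ n ih =>
      have hc : (PowerSeries.C (1 - qq)) ≠ 0 := by
        intro h
        apply one_sub_qq_ne
        have := congrArg (PowerSeries.constantCoeff) h
        simpa using this
      apply mul_left_cancel₀ hc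
      rw [lemI α β n, ih, show n + 1 + α + β = (n + α + β) + 1 from by omega, poch_succ,
        map_mul]
      have h3 : (1 - PowerSeries.X) *
          (PowerSeries.rescale qq (poch (n + α + β)) * PowerSeries.rescale qq (Fser α β n)) =
          ((1 - PowerSeries.C (qq ^ (n + α + β)) * PowerSeries.X) * poch (n + α + β)) *
            PowerSeries.rescale qq (Fser α β n) := by
        rw [← mul_assoc, lemIII]
      rw [h3]
      linear_combination (-(poch (n + α + β) *
        (1 - PowerSeries.C (qq ^ (n + α + β)) * PowerSeries.X))) * lemII α β n


theorem E_carlitz_identity (α β : ℕ) (hα : 1 ≤ α) (hβ : 1 ≤ β) (n : ℕ) :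
    (∑ k ∈ Finset.range (n + 1), PowerSeries.C (E α β n k) * PowerSeries.X ^ k) *
        (poch (n + α + β))⁻¹ =
      PowerSeries.mk (fun j => qbinom (j + α + β - 1) j * qint (j + β) ^ n) := by
  have hsum : (∑ k ∈ Finset.range (n + 1), PowerSeries.C (E α β n k) * PowerSeries.X ^ k) =
      Aser α β n := by
    ext j
    rw [map_sum]
    simp only [PowerSeries.coeff_C_mul, PowerSeries.coeff_X_pow, mul_ite, mul_one, mul_zero]
    rw [Finset.sum_ite_eq (Finset.range (n + 1)) j (fun k => E α β n k)]
    simp only [Aser, PowerSeries.coeff_mk, Finset.mem_range]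
    by_cases h : j < n + 1
    · simp [h]
    · simp [h, E_zero_of_lt α β n j (by omega)]
  have hF : PowerSeries.mk (fun j => qbinom (j + α + β - 1) j * qint (j + β) ^ n) =
      Fser α β n := rfl
  have hp : PowerSeries.constantCoeff (poch (n + α + β)) ≠ 0 := by
    rw [constCoeff_poch]; exact one_ne_zero
  rw [hsum, hF, Aeq α β hα hβ n, mul_right_comm, PowerSeries.mul_inv_cancel _ hp, one_mul]

end
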